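/- Let A ∈ ℂ with A·(A^2+4) ≠ 0 and let (w_i) satisfy w_{i+1} = A·w_i + w_{i−1} for i ≥ 1. For any positive even integer n, the characteristic polynomial det[x·δ_{jk} − w_{j+k}]_{0≤j,k≤n−1} equals x^n − (w_1·v_{n−1}(A,−1) + w_0·v_{n−2}(A,−1))·(u_n(A,−1)/A)·x^{n−1} + (w_0^2 + A·w_0·w_1 − w_1^2)·(u_n(A,−1)^2/A^2)·x^{n−2}. -/

import Mathlib

def lucasU {R : Type*} [CommRing R] (x y : R) : ℕ → R
  | 0 => 0
  | 1 => 1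
  | n + 2 => x * lucasU x y (n + 1) - y * lucasU x y n

def lucasV {R : Type*} [CommRing R] (x y : R) : ℕ → R
  | 0 => 2
  | 1 => x
  | n + 2 => x * lucasV x y (n + 1) - y * lucasV x y n

set_option maxHeartbeats 2000000 in
theorem stmt_18 (A : ℂ) (hA : A * (A ^ 2 + 4) ≠ 0) (w : ℕ → ℂ)
    (hw : ∀ i : ℕ, w (i + 2) = A * w (i + 1) + w i)
    (n : ℕ) (hn : 0 < n) (hev : Even n) (x : ℂ) :
    Matrix.det (Matrix.of fun j k : Fin n =>
        x * (if j = k then 1 else 0) - w ((j : ℕ) + (k : ℕ))) =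
      x ^ n
        - (w 1 * lucasV A (-1) (n - 1) + w 0 * lucasV A (-1) (n - 2)) *
            (lucasU A (-1) n / A) * x ^ (n - 1)
        + (w 0 ^ 2 + A * w 0 * w 1 - w 1 ^ 2) * (lucasU A (-1) n ^ 2 / A ^ 2) * x ^ (n - 2) := by
  have hA0 : A ≠ 0 := left_ne_zero_of_mul hA
  have hA4 : A ^ 2 + 4 ≠ 0 := right_ne_zero_of_mul hA
  obtain ⟨s, hs⟩ := IsAlgClosed.exists_pow_nat_eq (k := ℂ) (A ^ 2 + 4) zero_lt_two
  have hs0 : s ≠ 0 := by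
    intro h; apply hA4; rw [← hs, h]; ring
  obtain ⟨α, β, hsum, hdiff, hprod⟩ :
      ∃ α β : ℂ, α + β = A ∧ α - β = s ∧ α * β = -1 :=
    ⟨(A + s) / 2, (A - s) / 2, by ring, by ring, by
      field_simp
      linear_combination -hs⟩
  have hαβne : α * β ≠ 0 := by rw [hprod]; norm_num
  have hα0 : α ≠ 0 := left_ne_zero_of_mul hαβne
  have hβ0 : β ≠ 0 := right_ne_zero_of_mul hαβne
  have hα2 : α ^ 2 = A * α + 1 := by linear_combination α * hsum - hprod
  have hβ2 : β ^ 2 = A * β + 1 := by linear_combination β * hsum - hprod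
  have hα21 : α ^ 2 ≠ 1 := by
    intro h
    have h2 : A * α = 0 := by linear_combination h - hα2
    rcases mul_eq_zero.1 h2 with h' | h'
    · exact hA0 h'
    · exact hα0 h'
  have hβ21 : β ^ 2 ≠ 1 := by
    intro h
    have h2 : A * β = 0 := by linear_combination h - hβ2
    rcases mul_eq_zero.1 h2 with h' | h'
    · exact hA0 h'
    · exact hβ0 h'
  obtain ⟨a, b, hw0e, hw1e⟩ : ∃ a b : ℂ, w 0 = a + b ∧ w 1 = a * α + b * β := by
    refine ⟨(w 1 - β * w 0) / s, (α * w 0 - w 1) / s, ?_, ?_⟩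
    · field_simp
      linear_combination (-(w 0)) * hdiff
    · field_simp
      linear_combination (-(w 1)) * hdiff
  have key : ∀ m : ℕ, w m = a * α ^ m + b * β ^ m ∧
      w (m + 1) = a * α ^ (m + 1) + b * β ^ (m + 1) := by
    intro m
    induction m with
    | zero => exact ⟨by simpa using hw0e, by simpa using hw1e⟩
    | succ k ih =>
      refine ⟨ih.2, ?_⟩
      rw [hw k]
      linear_combination A * ih.2 + ih.1 - a * α ^ k * hα2 - b * β ^ k * hβ2
  have hwm : ∀ m : ℕ, w m = a * α ^ m + b * β ^ m := fun m => (key m).1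
  have keyU : ∀ m : ℕ, lucasU A (-1) m * s = α ^ m - β ^ m ∧
      lucasU A (-1) (m + 1) * s = α ^ (m + 1) - β ^ (m + 1) := by
    intro m
    induction m with
    | zero =>
      constructor
      · show (0 : ℂ) * s = α ^ 0 - β ^ 0
        norm_num
      · show (1 : ℂ) * s = α ^ 1 - β ^ 1
        rw [one_mul, pow_one, pow_one]
        exact hdiff.symm
    | succ k ih =>
      refine ⟨ih.2, ?_⟩
      show (A * lucasU A (-1) (k + 1) - (-1) * lucasU A (-1) k) * s = _
      linear_combination A * ih.2 + ih.1 - α ^ k * hα2 + β ^ k * hβ2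
  have hUm : ∀ m : ℕ, lucasU A (-1) m * s = α ^ m - β ^ m := fun m => (keyU m).1
  have keyV : ∀ m : ℕ, lucasV A (-1) m = α ^ m + β ^ m ∧
      lucasV A (-1) (m + 1) = α ^ (m + 1) + β ^ (m + 1) := by
    intro m
    induction m with
    | zero =>
      constructor
      · show (2 : ℂ) = α ^ 0 + β ^ 0
        norm_num
      · show A = α ^ 1 + β ^ 1
        rw [pow_one, pow_one]
        exact hsum.symm
    | succ k ih =>
      refine ⟨ih.2, ?_⟩
      show A * lucasV A (-1) (k + 1) - (-1) * lucasV A (-1) k = _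
      linear_combination A * ih.2 + ih.1 - α ^ k * hα2 - β ^ k * hβ2
  have hVm : ∀ m : ℕ, lucasV A (-1) m = α ^ m + β ^ m := fun m => (keyV m).1
  -- n = m + 2
  obtain ⟨m, rfl⟩ : ∃ m, n = m + 2 := by
    rcases hev with ⟨t, ht⟩
    exact ⟨n - 2, by omega⟩
  have hm : Even m := by rcases hev with ⟨t, ht⟩; exact ⟨t - 1, by omega⟩
  simp only [show m + 2 - 1 = m + 1 by omega, show m + 2 - 2 = m by omega]
  -- abbreviations
  obtain ⟨T, hTdef⟩ : ∃ t : ℂ, t = (w 1 * lucasV A (-1) (m + 1) + w 0 * lucasV A (-1) m) *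
      (lucasU A (-1) (m + 2) / A) := ⟨_, rfl⟩
  obtain ⟨D, hDdef⟩ : ∃ t : ℂ, t = (w 0 ^ 2 + A * w 0 * w 1 - w 1 ^ 2) *
      (lucasU A (-1) (m + 2) ^ 2 / A ^ 2) := ⟨_, rfl⟩
  rw [← hTdef, ← hDdef]
  -- substitution facts
  have hβe : β = -α⁻¹ := by
    field_simp
    linear_combination hprod
  have hAe : A = α - α⁻¹ := by rw [← hsum, hβe]; ring
  have hse : s = α + α⁻¹ := by rw [← hdiff, hβe]; ring
  have hAα : α - α⁻¹ ≠ 0 := by rw [← hAe]; exact hA0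
  have hsα : α + α⁻¹ ≠ 0 := by rw [← hse]; exact hs0
  have hgh : α ^ m * β ^ m = 1 := by
    rw [← mul_pow, hprod, hm.neg_one_pow]
  have hbm : β ^ m = (α ^ m)⁻¹ := (inv_eq_of_mul_eq_one_right hgh).symm
  have hαm0 : α ^ m ≠ 0 := pow_ne_zero _ hα0
  have hUe : lucasU A (-1) (m + 2) = (α ^ (m + 2) - β ^ (m + 2)) / s := by
    rw [eq_div_iff hs0]; exact hUm (m + 2)
  have hden : α ^ 2 - 1 = A * α := by linear_combination hα2
  have hdenβ : β ^ 2 - 1 = A * β := by linear_combination hβ2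
  have h21 : α ^ 2 - 1 ≠ 0 := sub_ne_zero.mpr hα21
  have h12 : 1 - α ^ 2 ≠ 0 := fun h => hα21 (by linear_combination -h)
  have h21β : β ^ 2 - 1 ≠ 0 := sub_ne_zero.mpr hβ21
  have h12β : 1 - β ^ 2 ≠ 0 := fun h => hβ21 (by linear_combination -h)
  obtain ⟨Sa, hSadef⟩ : ∃ t : ℂ, t = ((α ^ (m + 2)) ^ 2 - 1) / (A * α) := ⟨_, rfl⟩
  obtain ⟨Sb, hSbdef⟩ : ∃ t : ℂ, t = ((β ^ (m + 2)) ^ 2 - 1) / (A * β) := ⟨_, rfl⟩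
  -- the two scalar identities
  have hne1 : A * α * (A * β) * s ≠ 0 :=
    mul_ne_zero (mul_ne_zero (mul_ne_zero hA0 hα0) (mul_ne_zero hA0 hβ0)) hs0
  have hne2 : A * α * (A * β) * s ^ 2 ≠ 0 :=
    mul_ne_zero (mul_ne_zero (mul_ne_zero hA0 hα0) (mul_ne_zero hA0 hβ0)) (pow_ne_zero 2 hs0)
  have hSa' : Sa * (A * α) = (α ^ (m + 2)) ^ 2 - 1 := by
    rw [hSadef, div_mul_cancel₀]
    exact mul_ne_zero hA0 hα0
  have hSb' : Sb * (A * β) = (β ^ (m + 2)) ^ 2 - 1 := by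
    rw [hSbdef, div_mul_cancel₀]
    exact mul_ne_zero hA0 hβ0
  have hT' : T * A = (w 1 * lucasV A (-1) (m + 1) + w 0 * lucasV A (-1) m) *
      lucasU A (-1) (m + 2) := by
    rw [hTdef, mul_assoc, div_mul_cancel₀ _ hA0]
  have hD' : D * A ^ 2 = (w 0 ^ 2 + A * w 0 * w 1 - w 1 ^ 2) *
      lucasU A (-1) (m + 2) ^ 2 := by
    rw [hDdef, mul_assoc, div_mul_cancel₀ _ (pow_ne_zero 2 hA0)]
  have hclear : (a * ((α ^ (m + 2)) ^ 2 - 1)) * (A * β * s)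
        + (b * ((β ^ (m + 2)) ^ 2 - 1)) * (A * α * s)
      = ((w 1 * lucasV A (-1) (m + 1) + w 0 * lucasV A (-1) m) *
          (lucasU A (-1) (m + 2) * s)) * (A * α * β) := by
    rw [hw1e, hw0e, hVm (m + 1), hVm m, hUm (m + 2),
      show α ^ (m + 1) = α ^ m * α from pow_succ α m,
      show β ^ (m + 1) = β ^ m * β from pow_succ β m,
      show α ^ (m + 2) = α ^ m * α ^ 2 from pow_add α m 2,
      show β ^ (m + 2) = β ^ m * β ^ 2 from pow_add β m 2]
    generalize α ^ m = g at hgh ⊢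
    generalize β ^ m = h at hgh ⊢
    linear_combination (b * α * s + (-1) * b * α * β ^ 3 * h ^ 2 + (-1) * b * α * β ^ 3 * g * h + (-1) * b * α * β ^ 4 * h ^ 2 * s + (-1) * b * α * β ^ 5 * h ^ 2 + (-1) * b * α ^ 2 * β ^ 4 * g * h + b * α ^ 3 * β * g * h + b * α ^ 3 * β * g ^ 2 + b * α ^ 3 * β ^ 3 * g * h + b * α ^ 4 * β ^ 2 * g ^ 2 + a * β * s + (-1) * a * α * β ^ 3 * h ^ 2 + (-1) * a * α * β ^ 3 * g * h + (-1) * a * α ^ 2 * β ^ 4 * h ^ 2 + a * α ^ 3 * β * g * h + a * α ^ 3 * β * g ^ 2 + (-1) * a * α ^ 3 * β ^ 3 * g * h + (-1) * a * α ^ 4 * β * g ^ 2 * s + a * α ^ 4 * β ^ 2 * g * h + a * α ^ 5 * β * g ^ 2) * hsum + (b * α * β + (-1) * b * α * β ^ 5 * h ^ 2 + b * α ^ 2 + (-1) * b * α ^ 2 * β ^ 4 * h ^ 2 + a * β ^ 2 + a * α * β + (-1) * a * α ^ 4 * β ^ 2 * g ^ 2 + (-1) * a * α ^ 5 * β * g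 ^ 2) * hdiff + (b * β + (-1) * b * β * g * h + b * α * β ^ 2 * g * h + b * α * β ^ 4 * h ^ 2 + b * α * β ^ 4 * g * h + b * α ^ 2 * β ^ 3 * h ^ 2 + (-1) * b * α ^ 3 * g * h + (-1) * b * α ^ 3 * β ^ 2 * g * h + (-1) * b * α ^ 3 * β ^ 2 * g ^ 2 + (-1) * b * α ^ 4 * β * g ^ 2 + a * β ^ 3 * g * h + (-1) * a * α + a * α * g * h + a * α * β ^ 4 * h ^ 2 + (-1) * a * α ^ 2 * β * g * h + a * α ^ 2 * β ^ 3 * h ^ 2 + a * α ^ 2 * β ^ 3 * g * h + (-1) * a * α ^ 3 * β ^ 2 * g ^ 2 + (-1) * a * α ^ 4 * β * g * h + (-1) * a * α ^ 4 * β * g ^ 2) * hprod + (b * β + b * α ^ 3 + (-1) * a * β ^ 3 + (-1) * a * α) * hgh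
  have hclear2 : (a * ((α ^ (m + 2)) ^ 2 - 1)) * (b * ((β ^ (m + 2)) ^ 2 - 1)) * s ^ 2
      = (w 0 ^ 2 + A * w 0 * w 1 - w 1 ^ 2) * (lucasU A (-1) (m + 2) * s) ^ 2 * (α * β) := by
    rw [hw1e, hw0e, hUm (m + 2),
      show α ^ (m + 2) = α ^ m * α ^ 2 from pow_add α m 2,
      show β ^ (m + 2) = β ^ m * β ^ 2 from pow_add β m 2]
    generalize α ^ m = g at hgh ⊢
    generalize β ^ m = h at hgh ⊢
    linear_combination (b ^ 2 * α * β ^ 6 * h ^ 2 + (-2) * b ^ 2 * α ^ 3 * β ^ 4 * g * h + b ^ 2 * α ^ 5 * β ^ 2 * g ^ 2 + a * b * α * β ^ 6 * h ^ 2 + a * b * α ^ 2 * β ^ 5 * h ^ 2 + (-2) * a * b * α ^ 3 * β ^ 4 * g * h + (-2) * a * b * α ^ 4 * β ^ 3 * g * h + a * b * α ^ 5 * β ^ 2 * g ^ 2 + a * b * α ^ 6 * β * g ^ 2 + a ^ 2 * α ^ 2 * β ^ 5 * h ^ 2 + (-2) * a ^ 2 * α ^ 4 * β ^ 3 * g *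 h + a ^ 2 * α ^ 6 * β * g ^ 2) * hsum + ((-1) * a * b * s + a * b * β + a * b * β ^ 4 * h ^ 2 * s + (-1) * a * b * β ^ 5 * h ^ 2 + (-1) * a * b * α + a * b * α * β ^ 4 * h ^ 2 + a * b * α ^ 4 * g ^ 2 * s + (-1) * a * b * α ^ 4 * β * g ^ 2 + (-1) * a * b * α ^ 4 * β ^ 4 * g ^ 2 * h ^ 2 * s + a * b * α ^ 4 * β ^ 5 * g ^ 2 * h ^ 2 + a * b * α ^ 5 * g ^ 2 + (-1) * a * b * α ^ 5 * β ^ 4 * g ^ 2 * h ^ 2) * hdiff + ((-1) * b ^ 2 * α * β ^ 5 * h ^ 2 + 2 * b ^ 2 * α ^ 3 * β ^ 3 * g * h + (-1) * b ^ 2 * α ^ 5 * β * g ^ 2 + (-2) * a * b + 4 * a * b * g * h + (-2) * a * b * g ^ 2 * h ^ 2 + 2 * a * b * β ^ 2 * g * h + (-1) * a * b * β ^ 2 * g ^ 2 * h ^ 2 + (-1) * a * b * β ^ 6 * h ^ 2 + (-4) * a * b * α * β * g * h + 2 * a * b * α * β * g ^ 2 * h ^ 2 + (-2) * a * b * α *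 β ^ 3 * g * h + a * b * α * β ^ 3 * g ^ 2 * h ^ 2 + 2 * a * b * α ^ 2 * g * h + (-1) * a * b * α ^ 2 * g ^ 2 * h ^ 2 + 4 * a * b * α ^ 2 * β ^ 2 * g * h + (-2) * a * b * α ^ 2 * β ^ 2 * g ^ 2 * h ^ 2 + (-1) * a * b * α ^ 2 * β ^ 4 * h ^ 2 + 2 * a * b * α ^ 2 * β ^ 4 * g * h + (-1) * a * b * α ^ 2 * β ^ 4 * g ^ 2 * h ^ 2 + (-2) * a * b * α ^ 3 * β * g * h + a * b * α ^ 3 * β * g ^ 2 * h ^ 2 + 2 * a * b * α ^ 3 * β ^ 3 * g ^ 2 * h ^ 2 + a * b * α ^ 3 * β ^ 5 * g ^ 2 * h ^ 2 + 2 * a * b * α ^ 4 * β ^ 2 * g * h + (-1) * a * b * α ^ 4 * β ^ 2 * g ^ 2 + (-1) * a * b * α ^ 4 * β ^ 2 * g ^ 2 * h ^ 2 + (-2) * a * b * α ^ 4 * β ^ 4 * g ^ 2 * h ^ 2 + a * b * α ^ 5 * β ^ 3 * g ^ 2 * h ^ 2 + (-1) * a * b * α ^ 6 * g ^ 2 +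 (-1) * a ^ 2 * α * β ^ 5 * h ^ 2 + 2 * a ^ 2 * α ^ 3 * β ^ 3 * g * h + (-1) * a ^ 2 * α ^ 5 * β * g ^ 2) * hprod + ((-2) * a * b + 2 * a * b * g * h + (-1) * a * b * β ^ 2 + a * b * β ^ 2 * g * h + (-1) * a * b * α ^ 2 + a * b * α ^ 2 * g * h) * hgh
  have hTT : a * Sa + b * Sb = T := by
    refine mul_right_cancel₀ hne1 ?_
    linear_combination (a * (A * β) * s) * hSa' + (b * (A * α) * s) * hSb'
      - (A * α * β * s) * hT' + hclear
  have hDD : (a * Sa) * (b * Sb) = D := by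
    refine mul_right_cancel₀ hne2 ?_
    linear_combination (a * b * Sb * (A * β) * s ^ 2) * hSa'
      + (a * ((α ^ (m + 2)) ^ 2 - 1) * b * s ^ 2) * hSb' + hclear2 - (α * β * s ^ 2) * hD'
  -- main computation for y ≠ 0
  have main : ∀ y : ℂ, y ≠ 0 →
      Matrix.det (Matrix.of fun j k : Fin (m + 2) =>
        y * (if j = k then 1 else 0) - w ((j : ℕ) + (k : ℕ))) =
      y ^ (m + 2) - T * y ^ (m + 1) + D * y ^ m := by
    intro y hy
    set P : Matrix (Fin (m + 2)) (Fin 2) ℂ :=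
      Matrix.of (fun j i => if i = 0 then α ^ (j : ℕ) else β ^ (j : ℕ)) with hP
    set Q : Matrix (Fin 2) (Fin (m + 2)) ℂ :=
      Matrix.of (fun i k => -y⁻¹ * (if i = 0 then a * α ^ (k : ℕ) else b * β ^ (k : ℕ))) with hQ
    have hM : (Matrix.of fun j k : Fin (m + 2) =>
        y * (if j = k then 1 else 0) - w ((j : ℕ) + (k : ℕ))) = y • (1 + P * Q) := by
      ext j k
      simp only [Matrix.of_apply, Matrix.smul_apply, Matrix.add_apply, Matrix.one_apply,
        Matrix.mul_apply, Fin.sum_univ_two, hP, hQ, smul_eq_mul,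
        show ((0 : Fin 2) = 0) = True by simp, show ((1 : Fin 2) = 0) = False by simp,
        if_true, if_false]
      rw [hwm ((j : ℕ) + (k : ℕ)), pow_add, pow_add]
      split_ifs <;> field_simp <;> ring
    have hsuma : ∑ k : Fin (m + 2), α ^ (k : ℕ) * α ^ (k : ℕ) = Sa := by
      calc ∑ k : Fin (m + 2), α ^ (k : ℕ) * α ^ (k : ℕ)
          = ∑ k ∈ Finset.range (m + 2), (α ^ 2) ^ k := by
            rw [Fin.sum_univ_eq_sum_range (fun k => α ^ k * α ^ k)]
            exact Finset.sum_congr rfl fun k _ => by rw [← pow_add, ← two_mul, pow_mul]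
        _ = ((α ^ 2) ^ (m + 2) - 1) / (α ^ 2 - 1) := geom_sum_eq hα21 _
        _ = Sa := by
            rw [hSadef, ← pow_mul, Nat.mul_comm 2 (m + 2), pow_mul, hden]
    have hsumb : ∑ k : Fin (m + 2), β ^ (k : ℕ) * β ^ (k : ℕ) = Sb := by
      calc ∑ k : Fin (m + 2), β ^ (k : ℕ) * β ^ (k : ℕ)
          = ∑ k ∈ Finset.range (m + 2), (β ^ 2) ^ k := by
            rw [Fin.sum_univ_eq_sum_range (fun k => β ^ k * β ^ k)]
            exact Finset.sum_congr rfl fun k _ => by rw [← pow_add, ← two_mul, pow_mul]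
        _ = ((β ^ 2) ^ (m + 2) - 1) / (β ^ 2 - 1) := geom_sum_eq hβ21 _
        _ = Sb := by
            rw [hSbdef, ← pow_mul, Nat.mul_comm 2 (m + 2), pow_mul, hdenβ]
    have hmix : ∑ k : Fin (m + 2), α ^ (k : ℕ) * β ^ (k : ℕ) = 0 := by
      calc ∑ k : Fin (m + 2), α ^ (k : ℕ) * β ^ (k : ℕ)
          = ∑ k ∈ Finset.range (m + 2), (-1 : ℂ) ^ k := by
            rw [Fin.sum_univ_eq_sum_range (fun k => α ^ k * β ^ k)]
            exact Finset.sum_congr rfl fun k _ => by rw [← mul_pow, hprod]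
        _ = ((-1 : ℂ) ^ (m + 2) - 1) / (-1 - 1) := geom_sum_eq (by norm_num) _
        _ = 0 := by
            rw [(by simpa [add_assoc] using hm.add_one.add_one.neg_one_pow : ((-1 : ℂ)) ^ (m + 2) = 1)]
            norm_num
    have e00 : (Q * P) 0 0 = -y⁻¹ * (a * Sa) := by
      rw [Matrix.mul_apply]
      calc ∑ k : Fin (m + 2), Q 0 k * P k 0
          = ∑ k : Fin (m + 2), -y⁻¹ * a * (α ^ (k : ℕ) * α ^ (k : ℕ)) := by
            refine Finset.sum_congr rfl fun k _ => ?_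
            simp only [hQ, hP, Matrix.of_apply, show ((0 : Fin 2) = 0) = True by simp,
              show ((1 : Fin 2) = 0) = False by simp, if_true, if_false]
            ring
        _ = -y⁻¹ * a * ∑ k : Fin (m + 2), α ^ (k : ℕ) * α ^ (k : ℕ) := by
            rw [Finset.mul_sum]
        _ = -y⁻¹ * (a * Sa) := by rw [hsuma]; ring
    have e11 : (Q * P) 1 1 = -y⁻¹ * (b * Sb) := by
      rw [Matrix.mul_apply]
      calc ∑ k : Fin (m + 2), Q 1 k * P k 1
          = ∑ k : Fin (m + 2), -y⁻¹ * b * (β ^ (k : ℕ) * β ^ (k : ℕ)) := by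
            refine Finset.sum_congr rfl fun k _ => ?_
            simp only [hQ, hP, Matrix.of_apply, show ((0 : Fin 2) = 0) = True by simp,
              show ((1 : Fin 2) = 0) = False by simp, if_true, if_false]
            ring
        _ = -y⁻¹ * b * ∑ k : Fin (m + 2), β ^ (k : ℕ) * β ^ (k : ℕ) := by
            rw [Finset.mul_sum]
        _ = -y⁻¹ * (b * Sb) := by rw [hsumb]; ring
    have e01 : (Q * P) 0 1 = 0 := by
      rw [Matrix.mul_apply]
      calc ∑ k : Fin (m + 2), Q 0 k * P k 1
          = ∑ k : Fin (m + 2), -y⁻¹ * a * (α ^ (k : ℕ) * β ^ (k : ℕ)) := by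
            refine Finset.sum_congr rfl fun k _ => ?_
            simp only [hQ, hP, Matrix.of_apply, show ((0 : Fin 2) = 0) = True by simp,
              show ((1 : Fin 2) = 0) = False by simp, if_true, if_false]
            ring
        _ = -y⁻¹ * a * ∑ k : Fin (m + 2), α ^ (k : ℕ) * β ^ (k : ℕ) := by
            rw [Finset.mul_sum]
        _ = 0 := by rw [hmix]; ring
    have e10 : (Q * P) 1 0 = 0 := by
      rw [Matrix.mul_apply]
      calc ∑ k : Fin (m + 2), Q 1 k * P k 0
          = ∑ k : Fin (m + 2), -y⁻¹ * b * (α ^ (k : ℕ) * β ^ (k : ℕ)) := by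
            refine Finset.sum_congr rfl fun k _ => ?_
            simp only [hQ, hP, Matrix.of_apply, show ((0 : Fin 2) = 0) = True by simp,
              show ((1 : Fin 2) = 0) = False by simp, if_true, if_false]
            ring
        _ = -y⁻¹ * b * ∑ k : Fin (m + 2), α ^ (k : ℕ) * β ^ (k : ℕ) := by
            rw [Finset.mul_sum]
        _ = 0 := by rw [hmix]; ring
    rw [hM, Matrix.det_smul, Matrix.det_one_add_mul_comm, Matrix.det_fin_two]
    simp only [Fintype.card_fin, Matrix.add_apply, Matrix.one_apply_eq,
      Matrix.one_apply_ne (by decide : (0 : Fin 2) ≠ 1),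
      Matrix.one_apply_ne (by decide : (1 : Fin 2) ≠ 0), e00, e11, e01, e10, smul_eq_mul]
    rw [← hTT, ← hDD]
    field_simp
    ring
  -- polynomial argument to cover all x
  have hpq : (Matrix.det (Matrix.of fun j k : Fin (m + 2) =>
        (Polynomial.X : Polynomial ℂ) * (if j = k then 1 else 0) - Polynomial.C (w ((j : ℕ) + (k : ℕ))))) =
      Polynomial.X ^ (m + 2) - Polynomial.C T * Polynomial.X ^ (m + 1)
        + Polynomial.C D * Polynomial.X ^ m := by
    apply Polynomial.eq_of_infinite_eval_eq
    apply Set.Infinite.mono (s := {(0 : ℂ)}ᶜ)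
    · intro y hy
      have hy0 : y ≠ 0 := hy
      show Polynomial.eval y _ = Polynomial.eval y _
      have h1 : Polynomial.eval y (Matrix.det (Matrix.of fun j k : Fin (m + 2) =>
          (Polynomial.X : Polynomial ℂ) * (if j = k then 1 else 0) - Polynomial.C (w ((j : ℕ) + (k : ℕ))))) =
          Matrix.det (Matrix.of fun j k : Fin (m + 2) =>
            y * (if j = k then 1 else 0) - w ((j : ℕ) + (k : ℕ))) := by
        show Polynomial.evalRingHom y _ = _
        rw [RingHom.map_det]
        congr 1
        ext j k
        simp [Matrix.map_apply, apply_ite (Polynomial.eval y)]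
      rw [h1]
      simp only [Polynomial.eval_add, Polynomial.eval_sub, Polynomial.eval_mul,
        Polynomial.eval_pow, Polynomial.eval_X, Polynomial.eval_C]
      exact main y hy0
    · exact Set.Finite.infinite_compl (Set.finite_singleton 0)
  have h1 : Polynomial.eval x (Matrix.det (Matrix.of fun j k : Fin (m + 2) =>
      (Polynomial.X : Polynomial ℂ) * (if j = k then 1 else 0) - Polynomial.C (w ((j : ℕ) + (k : ℕ))))) =
      Matrix.det (Matrix.of fun j k : Fin (m + 2) =>
        x * (if j = k then 1 else 0) - w ((j : ℕ) + (k : ℕ))) := by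
    show Polynomial.evalRingHom x _ = _
    rw [RingHom.map_det]
    congr 1
    ext j k
    simp [Matrix.map_apply, apply_ite (Polynomial.eval x)]
  rw [← h1, hpq]
  simp only [Polynomial.eval_add, Polynomial.eval_sub, Polynomial.eval_mul,
    Polynomial.eval_pow, Polynomial.eval_X, Polynomial.eval_C]
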